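/- The map sending a linearly trivial k-algebra automorphism σ of A_{q,n} to the q-tuple (σ(x_1) − x_1, σ(x_2) − x_2, …, σ(x_q) − x_q) is a bijection from the group I_{q,n} of linearly trivial automorphisms onto the q-fold Cartesian product (m²)^q. -/

import Mathlib

set_option synthInstance.maxHeartbeats 400000

noncomputable section

/-- The ring of `n`-nil polynomials `A_{q,n} = k[x_1,…,x_q]/m_0^n`. -/
abbrev Aqn (k : Type) [Field k] (q n : ℕ) : Type :=
  MvPolynomial (Fin q) k ⧸
    (Ideal.span (Set.range (MvPolynomial.X : Fin q → MvPolynomial (Fin q) k))) ^ n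

/-- The image of the variable `x_i` in `A_{q,n}`. -/
def xA (k : Type) [Field k] (q n : ℕ) (i : Fin q) : Aqn k q n :=
  Ideal.Quotient.mk _ (MvPolynomial.X i)

/-- The maximal ideal `m` of `A_{q,n}` generated by `x_1, …, x_q`. -/
def mA (k : Type) [Field k] (q n : ℕ) : Ideal (Aqn k q n) :=
  Ideal.span (Set.range (xA k q n))

section Helpers

variable (k : Type) [Field k] (q n : ℕ)

abbrev Jspan : Ideal (MvPolynomial (Fin q) k) :=
  Ideal.span (Set.range (MvPolynomial.X : Fin q → MvPolynomial (Fin q) k))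

lemma prod_pow_mem {R ι : Type*} [CommRing R] (J : Ideal R) (s : Finset ι)
    (f : ι → R) (d : ι → ℕ) (h : ∀ i ∈ s, f i ∈ J) :
    (∏ i ∈ s, f i ^ d i) ∈ J ^ (∑ i ∈ s, d i) := by
  classical
  induction s using Finset.induction with
  | empty => simp [Ideal.one_eq_top]
  | @insert a s ha ih =>
    rw [Finset.prod_insert ha, Finset.sum_insert ha, pow_add]
    exact Ideal.mul_mem_mul (Ideal.pow_mem_pow (h a (Finset.mem_insert_self a s)) _)
      (ih fun i hi => h i (Finset.mem_insert_of_mem hi))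

lemma monomial_mem_Jpow (d : Fin q →₀ ℕ) (c : k) :
    MvPolynomial.monomial d c ∈ (Jspan k q) ^ (d.sum fun _ e => e) := by
  have h1 : MvPolynomial.monomial d (1 : k) ∈ (Jspan k q) ^ (d.sum fun _ e => e) := by
    rw [← MvPolynomial.prod_X_pow_eq_monomial, Finsupp.sum]
    exact prod_pow_mem _ _ _ _ fun i _ => Ideal.subset_span ⟨i, rfl⟩
  have : MvPolynomial.monomial d c = MvPolynomial.C c * MvPolynomial.monomial d 1 := by
    rw [MvPolynomial.C_mul_monomial, mul_one]
  rw [this]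
  exact Ideal.mul_mem_left _ _ h1

lemma mem_Jspan_of_constantCoeff (p : MvPolynomial (Fin q) k)
    (hp : MvPolynomial.constantCoeff p = 0) : p ∈ Jspan k q := by
  rw [MvPolynomial.as_sum p]
  refine Ideal.sum_mem _ fun d hd => ?_
  have hd0 : d ≠ 0 := by
    rintro rfl
    rw [MvPolynomial.mem_support_iff] at hd
    exact hd hp
  have hsum : 1 ≤ d.sum fun _ e => e := by
    rcases Finsupp.ne_iff.mp hd0 with ⟨i, hi⟩
    simp only [Finsupp.coe_zero, Pi.zero_apply] at hi
    calc 1 ≤ d i := Nat.one_le_iff_ne_zero.mpr hi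
    _ ≤ d.sum fun _ e => e := by
      rw [Finsupp.sum]
      exact Finset.single_le_sum (fun _ _ => Nat.zero_le _) (Finsupp.mem_support_iff.mpr hi)
  have := monomial_mem_Jpow k q d (MvPolynomial.coeff d p)
  have h1 := Ideal.pow_le_pow_right hsum this
  rwa [pow_one] at h1

lemma mA_eq_map : mA k q n = Ideal.map (Ideal.Quotient.mk ((Jspan k q) ^ n)) (Jspan k q) := by
  rw [mA, Ideal.map_span, ← Set.range_comp]
  rfl

lemma mA_pow_eq (t : ℕ) :
    (mA k q n) ^ t = Ideal.map (Ideal.Quotient.mk ((Jspan k q) ^ n)) ((Jspan k q) ^ t) := by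
  rw [mA_eq_map, Ideal.map_pow]

lemma mA_pow_n : (mA k q n) ^ n = ⊥ := by
  rw [mA_pow_eq]
  exact Ideal.map_quotient_self _

lemma existsConstAqn (c : Aqn k q n) :
    ∃ κ : k, c - algebraMap k (Aqn k q n) κ ∈ mA k q n := by
  obtain ⟨p, rfl⟩ := Ideal.Quotient.mk_surjective c
  refine ⟨MvPolynomial.constantCoeff p, ?_⟩
  have : (Ideal.Quotient.mk ((Jspan k q) ^ n)) p - algebraMap k (Aqn k q n)
      (MvPolynomial.constantCoeff p)
      = Ideal.Quotient.mk ((Jspan k q) ^ n) (p - MvPolynomial.C (MvPolynomial.constantCoeff p)) := by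
    rw [map_sub]
    rfl
  rw [this, mA_eq_map]
  refine Ideal.mem_map_of_mem _ (mem_Jspan_of_constantCoeff k q _ ?_)
  simp

lemma finiteAqn : Module.Finite k (Aqn k q n) := by
  classical
  have hsurj : Function.Surjective
      ((Ideal.Quotient.mkₐ k ((Jspan k q) ^ n)).toLinearMap.comp
        (Submodule.subtype (MvPolynomial.restrictTotalDegree (Fin q) k (n - 1)))) := by
    intro y
    obtain ⟨p, rfl⟩ := Ideal.Quotient.mk_surjective y
    set s := p.support.filter (fun d => (d.sum fun _ e => e) < n) with hs
    set p' := ∑ d ∈ s, MvPolynomial.monomial d (MvPolynomial.coeff d p) with hp'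
    have hmem : p' ∈ MvPolynomial.restrictTotalDegree (Fin q) k (n - 1) := by
      rw [MvPolynomial.mem_restrictTotalDegree]
      refine (MvPolynomial.totalDegree_finset_sum _ _).trans (Finset.sup_le fun d hd => ?_)
      refine le_trans (MvPolynomial.totalDegree_monomial_le _ _) ?_
      have hlt := (Finset.mem_filter.mp hd).2
      simp only [Finsupp.sum, id_eq] at hlt ⊢
      omega
    refine ⟨⟨p', hmem⟩, ?_⟩
    show Ideal.Quotient.mkₐ k ((Jspan k q) ^ n) p' = Ideal.Quotient.mk ((Jspan k q) ^ n) p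
    rw [Ideal.Quotient.mkₐ_eq_mk, Ideal.Quotient.eq]
    have hsplit : p - p' = ∑ d ∈ p.support.filter (fun d => ¬ (d.sum fun _ e => e) < n),
        MvPolynomial.monomial d (MvPolynomial.coeff d p) := by
      conv_lhs => rw [MvPolynomial.as_sum p]
      rw [hp', hs, ← Finset.sum_filter_add_sum_filter_not p.support
        (fun d => (d.sum fun _ e => e) < n)]
      ring
    rw [show p' - p = -(p - p') by ring, hsplit]
    refine neg_mem (Ideal.sum_mem _ fun d hd => ?_)
    have hge : n ≤ d.sum fun _ e => e := by
      have := (Finset.mem_filter.mp hd).2; omega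
    exact Ideal.pow_le_pow_right hge (monomial_mem_Jpow k q d _)
  exact Module.Finite.of_surjective _ hsurj

end Helpers

set_option maxHeartbeats 1000000 in
theorem linearly_trivial_auts_bijection (k : Type) [Field k] (q n : ℕ)
    (hq : 1 ≤ q) (hn : 2 ≤ n) :
    Function.Bijective
      (fun σ : {σ : Aqn k q n ≃ₐ[k] Aqn k q n //
          ∀ i, σ.1 (xA k q n i) - xA k q n i ∈ (mA k q n) ^ 2} =>
        (fun i => ⟨σ.1 (xA k q n i) - xA k q n i, σ.2 i⟩ :
          Fin q → ((mA k q n) ^ 2 : Ideal (Aqn k q n)))) := by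
  classical
  constructor
  · rintro ⟨σ, hσ⟩ ⟨τ, hτ⟩ h
    have hx : ∀ i, σ (xA k q n i) = τ (xA k q n i) := by
      intro i
      have h1 := congrArg Subtype.val (congrFun h i)
      simpa [sub_left_inj] using h1
    apply Subtype.ext
    have hcomp : σ.toAlgHom.comp (Ideal.Quotient.mkₐ k ((Jspan k q) ^ n)) =
        τ.toAlgHom.comp (Ideal.Quotient.mkₐ k ((Jspan k q) ^ n)) :=
      MvPolynomial.algHom_ext fun i => by simpa [xA] using hx i
    refine AlgEquiv.ext fun y => ?_
    obtain ⟨p, rfl⟩ := Ideal.Quotient.mkₐ_surjective k ((Jspan k q) ^ n) y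
    exact DFunLike.congr_fun hcomp p
  · intro a
    let φ0 : MvPolynomial (Fin q) k →ₐ[k] Aqn k q n :=
      MvPolynomial.aeval (fun i => xA k q n i + ((a i : Aqn k q n)))
    have hgen : ∀ i, xA k q n i + (a i : Aqn k q n) ∈ mA k q n := fun i =>
      add_mem (Ideal.subset_span ⟨i, rfl⟩)
        (Ideal.pow_le_self two_ne_zero (a i).2)
    have hker : ∀ p ∈ (Jspan k q) ^ n, φ0 p = 0 := by
      intro p hp
      have hmapJ : Ideal.map φ0.toRingHom (Jspan k q) ≤ mA k q n := by
        rw [Ideal.map_span, Ideal.span_le]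
        rintro _ ⟨_, ⟨i, rfl⟩, rfl⟩
        simpa [φ0] using hgen i
      have h2 : Ideal.map φ0.toRingHom ((Jspan k q) ^ n) ≤ ⊥ := by
        rw [Ideal.map_pow, ← mA_pow_n k q n]
        exact Ideal.pow_right_mono hmapJ n
      have h3 := h2 (Ideal.mem_map_of_mem φ0.toRingHom hp)
      simpa using h3
    let φ : Aqn k q n →ₐ[k] Aqn k q n := Ideal.Quotient.liftₐ _ φ0 hker
    have hφx : ∀ i, φ (xA k q n i) = xA k q n i + a i := by
      intro i
      show φ (Ideal.Quotient.mk _ (MvPolynomial.X i)) = _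
      simp only [φ, Ideal.Quotient.liftₐ_apply, Ideal.Quotient.lift_mk]
      exact MvPolynomial.aeval_X _ i
    let B := φ.range
    have hφrange : ∀ i, xA k q n i + (a i : Aqn k q n) ∈ B := fun i => ⟨xA k q n i, hφx i⟩
    have claim1 : ∀ j : ℕ,
        Submodule.restrictScalars k (((mA k q n) ^ j : Ideal (Aqn k q n))) ≤
          Subalgebra.toSubmodule B ⊔
            Submodule.restrictScalars k (((mA k q n) ^ (j + 1) : Ideal (Aqn k q n))) := by
      intro j
      induction j with
      | zero =>
        intro y _
        obtain ⟨κ, hκ⟩ := existsConstAqn k q n y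
        rw [Submodule.mem_sup]
        exact ⟨algebraMap k _ κ, B.algebraMap_mem κ, y - algebraMap k _ κ,
          by rw [Submodule.restrictScalars_mem, zero_add, Submodule.pow_one]; exact hκ, by ring⟩
      | succ j ih =>
        intro y hy
        rw [Submodule.restrictScalars_mem, Submodule.pow_succ] at hy
        refine Submodule.mul_induction_on hy ?_ (fun x y hx hy => add_mem hx hy)
        intro u hu v hv
        obtain ⟨b, hb, r, hr, hbr⟩ := Submodule.mem_sup.mp (ih (by simpa using hu))
        rw [Submodule.restrictScalars_mem] at hr
        have hbmj : b ∈ (mA k q n) ^ j := by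
          have hru : u - r ∈ (mA k q n) ^ j :=
            sub_mem hu (Ideal.pow_le_pow_right (Nat.le_succ j) hr)
          have : b = u - r := by rw [← hbr]; ring
          rwa [this]
        have key : b * v ∈ Subalgebra.toSubmodule B ⊔
            Submodule.restrictScalars k (((mA k q n) ^ (j + 1 + 1) : Ideal (Aqn k q n))) := by
          obtain ⟨c, hc⟩ := Ideal.mem_span_range_iff_exists_fun.mp hv
          rw [← hc, Finset.mul_sum]
          refine sum_mem fun i _ => ?_
          obtain ⟨κ, hκ⟩ := existsConstAqn k q n (c i)
          have hdecomp : b * (c i * xA k q n i) =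
              algebraMap k (Aqn k q n) κ * (b * (xA k q n i + a i)) +
                (b * ((c i - algebraMap k (Aqn k q n) κ) * (xA k q n i + a i))
                  - b * (c i * (a i))) := by
            ring
          rw [hdecomp]
          refine add_mem (Submodule.mem_sup_left ?_) (Submodule.mem_sup_right ?_)
          · have hbB : b ∈ B := hb
            exact (Subalgebra.mem_toSubmodule _).mpr
              (mul_mem (B.algebraMap_mem κ) (mul_mem hbB (hφrange i)))
          · rw [Submodule.restrictScalars_mem]
            refine sub_mem ?_ ?_
            · have h2 : (c i - algebraMap k _ κ) * (xA k q n i + a i) ∈ (mA k q n) ^ 2 := by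
                have h3 := Ideal.mul_mem_mul hκ (hgen i)
                have e : (mA k q n) ^ 2 = mA k q n * mA k q n := by
                  rw [show (2:ℕ) = 1 + 1 from rfl, Submodule.pow_add _ one_ne_zero, Submodule.pow_one]
                exact (le_of_eq e.symm) h3
              have := Ideal.mul_mem_mul hbmj h2
              rwa [← Submodule.pow_add _ two_ne_zero] at this
            · have h2 : c i * (a i : Aqn k q n) ∈ (mA k q n) ^ 2 :=
                Ideal.mul_mem_left _ _ (a i).2
              have := Ideal.mul_mem_mul hbmj h2
              rwa [← Submodule.pow_add _ two_ne_zero] at this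
        have huv : u * v = b * v + r * v := by rw [← hbr]; ring
        rw [huv]
        refine add_mem key (Submodule.mem_sup_right ?_)
        rw [Submodule.restrictScalars_mem, Submodule.pow_succ]
        exact Ideal.mul_mem_mul hr hv
    have claim2 : ∀ j : ℕ, (⊤ : Submodule k (Aqn k q n)) ≤
        Subalgebra.toSubmodule B ⊔
          Submodule.restrictScalars k (((mA k q n) ^ j : Ideal (Aqn k q n))) := by
      intro j
      induction j with
      | zero =>
        intro y _
        refine Submodule.mem_sup_right ?_
        rw [Submodule.restrictScalars_mem, Submodule.pow_zero, Ideal.one_eq_top]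
        exact Submodule.mem_top
      | succ j ih => exact le_trans ih (sup_le le_sup_left (claim1 j))
    have hsurjφ : Function.Surjective φ := by
      intro y
      have h := claim2 n (Submodule.mem_top (x := y))
      rw [mA_pow_n k q n] at h
      have : Subalgebra.toSubmodule B ⊔
          Submodule.restrictScalars k ((⊥ : Ideal (Aqn k q n))) =
          Subalgebra.toSubmodule B := by
        rw [Submodule.restrictScalars_bot, sup_bot_eq]
      rw [this] at h
      exact h
    haveI : Module.Finite k (Aqn k q n) := finiteAqn k q n
    have hinjφ : Function.Injective φ :=
      (LinearMap.injective_iff_surjective (f := φ.toLinearMap)).mpr hsurjφ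
    let σ : Aqn k q n ≃ₐ[k] Aqn k q n := AlgEquiv.ofBijective φ ⟨hinjφ, hsurjφ⟩
    have hσx : ∀ i, σ (xA k q n i) = xA k q n i + a i := hφx
    refine ⟨⟨σ, fun i => ?_⟩, ?_⟩
    · show σ (xA k q n i) - xA k q n i ∈ mA k q n ^ 2
      rw [hσx i]
      simpa using (a i).2
    · funext i
      apply Subtype.ext
      show σ (xA k q n i) - xA k q n i = a i
      rw [hσx i]
      ring
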